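/- Let 𝕋 be an almost periodic time scale (Π ≠ {0}) and u ∈ U_∞^Inv. Then PAP(𝕋,ℝⁿ,u), equipped with the sup-norm ‖f‖_∞ = sup_{t∈𝕋} ‖f(t)‖, is a complete metric space (a Banach space, being a closed subspace of the Banach space of bounded continuous functions 𝕋 → ℝⁿ). -/

import Mathlib

open MeasureTheory Filter Set

noncomputable section

/-- Forward jump operator of a time scale `T`. -/
def tsSigma (T : Set ℝ) (t : ℝ) : ℝ := sInf {s | s ∈ T ∧ t < s}

/-- Graininess of a time scale. -/
def tsGrain (T : Set ℝ) (t : ℝ) : ℝ := tsSigma T t - t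

/-- The set `Π` of translation numbers of a time scale. -/
def tsPi (T : Set ℝ) : Set ℝ := {τ : ℝ | ∀ t ∈ T, t + τ ∈ T ∧ t - τ ∈ T}

/-- An almost periodic time scale: a nonempty closed subset of `ℝ` with `Π ≠ {0}`. -/
def APTimeScale (T : Set ℝ) : Prop :=
  T.Nonempty ∧ IsClosed T ∧ ∃ τ ∈ tsPi T, τ ≠ 0

/-- The Δ-measure of the time scale `T`:
Lebesgue measure restricted to `T` plus point masses `μ(t)·δ_t` at right-scattered points. -/
def deltaMeasure (T : Set ℝ) : Measure ℝ :=
  volume.restrict T +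
    Measure.sum (fun p : {t : ℝ // t ∈ T ∧ t < tsSigma T t} =>
      (ENNReal.ofReal (tsGrain T p.1)) • Measure.dirac (p.1 : ℝ))

/-- The integrand `g_a` appearing in the generalized exponential function. -/
def gExp (T : Set ℝ) (a : ℝ) (τ : ℝ) : ℝ :=
  if 0 < tsGrain T τ then Real.log (1 + tsGrain T τ * a) / tsGrain T τ else a

/-- The generalized exponential function `e_{⊖a}(t, s)` (intended for `s ≤ t`). -/
def eOminus (T : Set ℝ) (a t s : ℝ) : ℝ :=
  Real.exp (-∫ τ in Ico s t ∩ T, gExp T a τ ∂(deltaMeasure T))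

/-- `t̄ = min([0,∞) ∩ T)`. -/
def tsT0 (T : Set ℝ) : ℝ := sInf {t : ℝ | t ∈ T ∧ 0 ≤ t}

/-- `Q_r = [t̄ - r, t̄ + r] ∩ T`. -/
def Qr (T : Set ℝ) (r : ℝ) : Set ℝ := Icc (tsT0 T - r) (tsT0 T + r) ∩ T

/-- `u(Q_r) = ∫_{Q_r} u dμ_Δ`. -/
def uQ (T : Set ℝ) (u : ℝ → ℝ) (r : ℝ) : ℝ := ∫ t in Qr T r, u t ∂(deltaMeasure T)

/-- The filter `r → ∞` along `Π`. -/
def alongPi (T : Set ℝ) : Filter ℝ := atTop ⊓ 𝓟 (tsPi T)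

/-- The filter `|t| → ∞`, `t ∈ T`. -/
def absAtTopIn (T : Set ℝ) : Filter ℝ := (atTop ⊔ atBot) ⊓ 𝓟 T

/-- The class `U_∞` of admissible weights on the time scale `T`. -/
def UInfty (T : Set ℝ) (u : ℝ → ℝ) : Prop :=
  Measurable u ∧ (∀ t ∈ T, 0 < u t) ∧
  (∀ s : Set ℝ, Bornology.IsBounded s → IntegrableOn u (s ∩ T) (deltaMeasure T)) ∧
  (∃ c > 0, ∀ t ∈ T, c ≤ u t) ∧
  Tendsto (uQ T u) (alongPi T) atTop

/-- The class `U_∞^Inv` of weights: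
`limsup_{|t|→∞, t∈T} u(t+s)/u(t) < ∞` for every `s ∈ Π`. -/
def UInftyInv (T : Set ℝ) (u : ℝ → ℝ) : Prop :=
  UInfty T u ∧ ∀ s ∈ tsPi T, ∃ C : ℝ, ∀ᶠ t in absAtTopIn T, u (t + s) / u t ≤ C

variable {E : Type*} [NormedAddCommGroup E]

/-- Almost periodic functions on a time scale (Bohr-type definition via `Π`). -/
def APfun (T : Set ℝ) (f : ℝ → E) : Prop :=
  ContinuousOn f T ∧
  ∀ ε > 0, ∃ l > 0, ∀ x : ℝ, ∃ τ ∈ tsPi T, τ ∈ Icc x (x + l) ∧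
    ∀ t ∈ T, ‖f (t + τ) - f t‖ < ε

/-- Bounded continuous functions on the time scale `T`. -/
def BCfun (T : Set ℝ) (f : ℝ → E) : Prop :=
  ContinuousOn f T ∧ ∃ C : ℝ, ∀ t ∈ T, ‖f t‖ ≤ C

/-- The weighted ergodic space `PAP₀(T, E, u)`. -/
def PAP0fun (T : Set ℝ) (u : ℝ → ℝ) (f : ℝ → E) : Prop :=
  BCfun T f ∧
  Tendsto (fun r => (uQ T u r)⁻¹ * ∫ t in Qr T r, ‖f t‖ * u t ∂(deltaMeasure T))
    (alongPi T) (nhds 0)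

/-- Weighted pseudo-almost periodic functions on the time scale `T`. -/
def PAPfun (T : Set ℝ) (u : ℝ → ℝ) (f : ℝ → E) : Prop :=
  ∃ g h : ℝ → E, APfun T g ∧ PAP0fun T u h ∧ ∀ t ∈ T, f t = g t + h t

/-- `d` is the Δ-derivative of `f` at `t ∈ T`. -/
def deltaDeriv [NormedSpace ℝ E] (T : Set ℝ) (f : ℝ → E) (t : ℝ) (d : E) : Prop :=
  ∀ ε > 0, ∃ δ > 0, ∀ s ∈ T, |s - t| < δ →
    ‖f (tsSigma T t) - f s - (tsSigma T t - s) • d‖ ≤ ε * |tsSigma T t - s|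

/-- A fixed matrix norm (the ℓ¹ norm of the entries). -/
def matNorm {n : ℕ} (M : Matrix (Fin n) (Fin n) ℝ) : ℝ := ∑ i, ∑ j, |M i j|

/-- The linear system `x^Δ = A(t) x` admits an exponential dichotomy on `T`. -/
def ExpDichotomy {n : ℕ} (T : Set ℝ) (A : ℝ → Matrix (Fin n) (Fin n) ℝ) : Prop :=
  ∃ K > (0 : ℝ), ∃ α > (0 : ℝ), ∃ P : Matrix (Fin n) (Fin n) ℝ, P * P = P ∧
    ∃ X : ℝ → Matrix (Fin n) (Fin n) ℝ,
      (∀ t ∈ T, IsUnit (X t)) ∧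
      (∀ t ∈ T, ∀ i j, deltaDeriv T (fun s => X s i j) t ((A t * X t) i j)) ∧
      (∀ s ∈ T, ∀ t ∈ T, tsSigma T s ≤ t →
        matNorm (X t * P * (X (tsSigma T s))⁻¹) ≤ K * eOminus T α t (tsSigma T s)) ∧
      (∀ s ∈ T, ∀ t ∈ T, t ≤ tsSigma T s →
        matNorm (X t * (1 - P) * (X (tsSigma T s))⁻¹) ≤ K * eOminus T α (tsSigma T s) t)

/-- `x` is a bounded continuous solution on `T` of `x^Δ(t) = A(t) x(t) + F(t)`. -/
def IsLinBddSol {n : ℕ} (T : Set ℝ) (A : ℝ → Matrix (Fin n) (Fin n) ℝ)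
    (F x : ℝ → Fin n → ℝ) : Prop :=
  BCfun T x ∧ ∀ t ∈ T, deltaDeriv T x t ((A t).mulVec (x t) + F t)

/-- `x` is a (continuous, Δ-differentiable) solution of the delayed cellular neural network
on the set `S ⊆ T`. -/
def IsCNNSol {n : ℕ} (T S : Set ℝ) (c : Fin n → ℝ → ℝ) (a b : Fin n → Fin n → ℝ → ℝ)
    (f : Fin n → ℝ → ℝ) (γ : Fin n → Fin n → ℝ) (I : Fin n → ℝ → ℝ)
    (x : ℝ → Fin n → ℝ) : Prop :=
  ContinuousOn x T ∧
  ∀ t ∈ S, ∀ i, deltaDeriv T (fun s => x s i) t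
    (-(c i t) * x t i + (∑ j, a i j t * f j (x t j)) +
      (∑ j, b i j t * f j (x (t - γ i j) j)) + I i t)

end
noncomputable section PapAux

open MeasureTheory Filter Set

namespace PapComplete

variable {T : Set ℝ}

theorem mem_add_of_tsPi {t τ : ℝ} (ht : t ∈ T) (hτ : τ ∈ tsPi T) : t + τ ∈ T :=
  (hτ t ht).1

theorem mem_sub_of_tsPi {t τ : ℝ} (ht : t ∈ T) (hτ : τ ∈ tsPi T) : t - τ ∈ T :=
  (hτ t ht).2

theorem tsPi_zero : (0 : ℝ) ∈ tsPi T := by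
  intro t ht; simpa using ht

theorem tsPi_add {τ σ : ℝ} (hτ : τ ∈ tsPi T) (hσ : σ ∈ tsPi T) : τ + σ ∈ tsPi T := by
  intro t ht
  constructor
  · have h2 := mem_add_of_tsPi (mem_add_of_tsPi ht hτ) hσ
    have h : t + τ + σ = t + (τ + σ) := by ring
    rwa [h] at h2
  · have h2 := mem_sub_of_tsPi (mem_sub_of_tsPi ht hτ) hσ
    have h : t - τ - σ = t - (τ + σ) := by ring
    rwa [h] at h2

theorem tsPi_neg {τ : ℝ} (hτ : τ ∈ tsPi T) : -τ ∈ tsPi T := by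
  intro t ht
  constructor
  · have h2 := mem_sub_of_tsPi ht hτ
    have h : t - τ = t + -τ := by ring
    rwa [h] at h2
  · have h2 := mem_add_of_tsPi ht hτ
    have h : t + τ = t - -τ := by ring
    rwa [h] at h2

/-- `tsPi T` as an additive subgroup of `ℝ`. -/
def piGrp (T : Set ℝ) : AddSubgroup ℝ where
  carrier := tsPi T
  zero_mem' := tsPi_zero
  add_mem' := tsPi_add
  neg_mem' := tsPi_neg

theorem tsPi_zsmul {τ : ℝ} (hτ : τ ∈ tsPi T) (k : ℤ) : (k : ℝ) * τ ∈ tsPi T := by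
  have h : (k : ℝ) * τ = k • τ := by simp
  have := zsmul_mem (show τ ∈ piGrp T from hτ) k
  rwa [← h] at this

/-- Relative density of `Π`: every interval of length `τ₀` contains a multiple of `τ₀ ∈ Π`. -/
theorem tsPi_dense {τ₀ : ℝ} (hτ₀ : τ₀ ∈ tsPi T) (hpos : 0 < τ₀) (x : ℝ) :
    ∃ τ ∈ tsPi T, τ ∈ Icc x (x + τ₀) := by
  refine ⟨(⌈x / τ₀⌉ : ℝ) * τ₀, tsPi_zsmul hτ₀ _, ?_, ?_⟩
  · have h1 : x / τ₀ ≤ (⌈x / τ₀⌉ : ℝ) := Int.le_ceil _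
    calc x = x / τ₀ * τ₀ := by field_simp
    _ ≤ (⌈x / τ₀⌉ : ℝ) * τ₀ := by nlinarith
  · have h1 : (⌈x / τ₀⌉ : ℝ) < x / τ₀ + 1 := Int.ceil_lt_add_one _
    have : x / τ₀ * τ₀ = x := by field_simp
    nlinarith

/-- `Π` contains a positive element. -/
theorem tsPi_pos_elt (hT : APTimeScale T) : ∃ τ₀ ∈ tsPi T, 0 < τ₀ := by
  obtain ⟨-, -, τ, hτ, hne⟩ := hT
  rcases lt_trichotomy τ 0 with h | h | h
  · exact ⟨-τ, tsPi_neg hτ, by linarith⟩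
  · exact absurd h hne
  · exact ⟨τ, hτ, h⟩

end PapComplete
namespace PapComplete

variable {T : Set ℝ} {E : Type*} [NormedAddCommGroup E]

/-- Almost periodic functions are uniformly continuous on `T`. -/
theorem ap_unifCont (hTcl : IsClosed T) {f : ℝ → E} (hf : APfun T f) :
    ∀ ε > 0, ∃ δ > 0, ∀ s ∈ T, ∀ t ∈ T, |s - t| ≤ δ → ‖f s - f t‖ ≤ ε := by
  intro ε hε
  obtain ⟨l, hl, hap⟩ := hf.2 (ε / 3) (by linarith)
  set K : Set ℝ := T ∩ Icc (-1) (l + 1) with hK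
  have hKcomp : IsCompact K := isCompact_Icc.inter_left hTcl
  have hfK : ContinuousOn f K := hf.1.mono inter_subset_left
  have hUC : UniformContinuousOn f K :=
    hKcomp.uniformContinuousOn_of_continuous hfK
  rw [Metric.uniformContinuousOn_iff] at hUC
  obtain ⟨δ, hδ, hUC⟩ := hUC (ε / 3) (by linarith)
  refine ⟨min (δ / 2) 1, by positivity, ?_⟩
  intro s hs t ht hst
  obtain ⟨τ, hτP, hτmem, hτtr⟩ := hap (-t)
  have htT : t + τ ∈ T := mem_add_of_tsPi ht hτP
  have hsT : s + τ ∈ T := mem_add_of_tsPi hs hτP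
  have h1 : |s - t| ≤ δ / 2 := le_trans hst (min_le_left _ _)
  have h2 : |s - t| ≤ 1 := le_trans hst (min_le_right _ _)
  have habs := abs_le.1 h1
  have habs2 := abs_le.1 h2
  simp only [mem_Icc] at hτmem
  have htK : t + τ ∈ K := by
    refine ⟨htT, mem_Icc.2 ⟨?_, ?_⟩⟩ <;> [linarith [hτmem.1]; linarith [hτmem.2]]
  have hsK : s + τ ∈ K := by
    refine ⟨hsT, mem_Icc.2 ⟨?_, ?_⟩⟩ <;>
      [linarith [hτmem.1, habs2.1]; linarith [hτmem.2, habs2.2]]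
  have hdist : dist (s + τ) (t + τ) < δ := by
    rw [Real.dist_eq]
    have : s + τ - (t + τ) = s - t := by ring
    rw [this]
    linarith [h1]
  have hmid : ‖f (s + τ) - f (t + τ)‖ < ε / 3 := by
    have := hUC _ hsK _ htK hdist
    rwa [dist_eq_norm] at this
  have hstr : ‖f (s + τ) - f s‖ < ε / 3 := hτtr s hs
  have httr : ‖f (t + τ) - f t‖ < ε / 3 := hτtr t ht
  calc ‖f s - f t‖
      = ‖(f s - f (s + τ)) + (f (s + τ) - f (t + τ)) + (f (t + τ) - f t)‖ := by
        congr 1; abel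
    _ ≤ ‖f s - f (s + τ)‖ + ‖f (s + τ) - f (t + τ)‖ + ‖f (t + τ) - f t‖ := by
        exact norm_add₃_le
    _ ≤ ε := by rw [norm_sub_rev (f s)]; linarith

end PapComplete
namespace PapComplete

variable {T : Set ℝ} {E : Type*} [NormedAddCommGroup E]

/-- Finite net for the translates of an almost periodic function. -/
theorem ap_net (hTcl : IsClosed T) {f : ℝ → E} (hf : APfun T f) {ε : ℝ} (hε : 0 < ε) :
    ∃ s : Finset ℝ, ∀ τ ∈ tsPi T, ∃ a ∈ s, a ∈ tsPi T ∧
      ∀ t ∈ T, ‖f (t + τ) - f (t + a)‖ ≤ ε := by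
  obtain ⟨l, hl, hap⟩ := hf.2 (ε / 3) (by linarith)
  obtain ⟨δ, hδ, hUC⟩ := ap_unifCont hTcl hf (ε / 3) (by linarith)
  classical
  set C : ℕ → Set ℝ := fun i => {σ : ℝ | σ ∈ tsPi T ∧ σ ∈ Icc (i * δ) (i * δ + δ)} with hC
  set rep : ℕ → ℝ := fun i => if h : (C i).Nonempty then h.choose else 0 with hrep
  set M : ℕ := ⌈l / δ⌉₊ + 1 with hM
  refine ⟨(Finset.range M).image rep, ?_⟩
  intro τ hτ
  obtain ⟨τ', hτ'P, hτ'mem, hτ'tr⟩ := hap (-τ)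
  set σ := τ + τ' with hσ
  have hσP : σ ∈ tsPi T := tsPi_add hτ hτ'P
  simp only [mem_Icc] at hτ'mem
  have hσ0 : 0 ≤ σ := by simp only [hσ]; linarith [hτ'mem.1]
  have hσl : σ ≤ l := by simp only [hσ]; linarith [hτ'mem.2]
  set i : ℕ := ⌊σ / δ⌋₊ with hi
  have hiM : i < M := by
    have h1 : i ≤ ⌊l / δ⌋₊ := Nat.floor_le_floor (by gcongr)
    have h2 : ⌊l / δ⌋₊ ≤ ⌈l / δ⌉₊ := Nat.floor_le_ceil _
    omega
  have hσC : σ ∈ C i := by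
    refine ⟨hσP, ?_, ?_⟩
    · have := Nat.floor_le (a := σ / δ) (by positivity)
      calc (i : ℝ) * δ ≤ σ / δ * δ := by
            exact mul_le_mul_of_nonneg_right this (le_of_lt hδ)
        _ = σ := by field_simp
    · have := Nat.lt_floor_add_one (σ / δ)
      have h2 : σ / δ * δ < ((i : ℝ) + 1) * δ := by
        exact mul_lt_mul_of_pos_right this hδ
      have h3 : σ / δ * δ = σ := by field_simp
      nlinarith
  have hCi : (C i).Nonempty := ⟨σ, hσC⟩
  have hrepC : rep i ∈ C i := by
    simp only [hrep, dif_pos hCi]; exact hCi.choose_spec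
  refine ⟨rep i, Finset.mem_image_of_mem rep (Finset.mem_range.2 hiM), hrepC.1, ?_⟩
  intro t ht
  have htτ : t + τ ∈ T := mem_add_of_tsPi ht hτ
  have htσ : t + σ ∈ T := mem_add_of_tsPi ht hσP
  have hta : t + rep i ∈ T := mem_add_of_tsPi ht hrepC.1
  have h1 : ‖f (t + τ) - f (t + σ)‖ < ε / 3 := by
    have heq : t + σ = (t + τ) + τ' := by simp only [hσ]; ring
    rw [heq, norm_sub_rev]
    exact hτ'tr _ htτ
  have h2 : ‖f (t + σ) - f (t + rep i)‖ ≤ ε / 3 := by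
    refine hUC _ htσ _ hta ?_
    obtain ⟨-, hr1, hr2⟩ := hrepC
    obtain ⟨hs1, hs2⟩ := hσC.2
    have : t + σ - (t + rep i) = σ - rep i := by ring
    rw [this, abs_le]
    constructor <;> linarith
  calc ‖f (t + τ) - f (t + rep i)‖
      = ‖(f (t + τ) - f (t + σ)) + (f (t + σ) - f (t + rep i))‖ := by congr 1; abel
    _ ≤ ‖f (t + τ) - f (t + σ)‖ + ‖f (t + σ) - f (t + rep i)‖ := norm_add_le _ _
    _ ≤ ε := by linarith

end PapComplete
namespace PapComplete

variable {T : Set ℝ} {E : Type*} [NormedAddCommGroup E]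

/-- Common finite net with bounded representatives for a pair of AP functions. -/
theorem ap_pair_net (hTcl : IsClosed T) {f g : ℝ → E} (hf : APfun T f) (hg : APfun T g)
    {ε : ℝ} (hε : 0 < ε) :
    ∃ M : ℝ, 0 ≤ M ∧ ∀ τ ∈ tsPi T, ∃ r ∈ tsPi T, |r| ≤ M ∧ ∀ t ∈ T,
      ‖f (t + τ) - f (t + r)‖ ≤ ε ∧ ‖g (t + τ) - g (t + r)‖ ≤ ε := by
  classical
  obtain ⟨sf, hsf⟩ := ap_net hTcl hf (half_pos hε)
  obtain ⟨sg, hsg⟩ := ap_net hTcl hg (half_pos hε)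
  set P : ℝ → ℝ → Set ℝ := fun a b =>
    {r : ℝ | r ∈ tsPi T ∧ ∀ t ∈ T,
      ‖f (t + r) - f (t + a)‖ ≤ ε / 2 ∧ ‖g (t + r) - g (t + b)‖ ≤ ε / 2} with hP
  set rep2 : ℝ × ℝ → ℝ := fun p => if h : (P p.1 p.2).Nonempty then h.choose else 0
    with hrep2
  set S : Finset ℝ := (sf ×ˢ sg).image rep2 with hS
  refine ⟨∑ x ∈ S, |x|, Finset.sum_nonneg fun x _ => abs_nonneg x, ?_⟩
  intro τ hτ
  obtain ⟨a, haS, haP, hfa⟩ := hsf τ hτ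
  obtain ⟨b, hbS, hbP, hgb⟩ := hsg τ hτ
  have hne : (P a b).Nonempty := ⟨τ, hτ, fun t ht => ⟨hfa t ht, hgb t ht⟩⟩
  set r := rep2 (a, b) with hr
  have hrP : r ∈ P a b := by
    simp only [hr, hrep2, dif_pos hne]; exact hne.choose_spec
  have hrS : r ∈ S := Finset.mem_image_of_mem rep2 (Finset.mem_product.2 ⟨haS, hbS⟩)
  refine ⟨r, hrP.1, ?_, ?_⟩
  · exact Finset.single_le_sum (fun x _ => abs_nonneg x) hrS
  · intro t ht
    obtain ⟨h1, h2⟩ := hrP.2 t ht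
    constructor
    · calc ‖f (t + τ) - f (t + r)‖
          = ‖(f (t + τ) - f (t + a)) + (f (t + a) - f (t + r))‖ := by congr 1; abel
        _ ≤ ‖f (t + τ) - f (t + a)‖ + ‖f (t + a) - f (t + r)‖ := norm_add_le _ _
        _ ≤ ε := by rw [norm_sub_rev (f (t + a))]; linarith [hfa t ht]
    · calc ‖g (t + τ) - g (t + r)‖
          = ‖(g (t + τ) - g (t + b)) + (g (t + b) - g (t + r))‖ := by congr 1; abel
        _ ≤ ‖g (t + τ) - g (t + b)‖ + ‖g (t + b) - g (t + r)‖ := norm_add_le _ _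
        _ ≤ ε := by rw [norm_sub_rev (g (t + b))]; linarith [hgb t ht]

/-- Common `ε`-translation numbers, relatively dense, for a pair of AP functions. -/
theorem ap_common (hT : APTimeScale T) {f g : ℝ → E} (hf : APfun T f) (hg : APfun T g)
    {ε : ℝ} (hε : 0 < ε) :
    ∃ L > 0, ∀ x : ℝ, ∃ τ ∈ tsPi T, τ ∈ Icc x (x + L) ∧ ∀ t ∈ T,
      ‖f (t + τ) - f t‖ ≤ ε ∧ ‖g (t + τ) - g t‖ ≤ ε := by
  obtain ⟨τ₀, hτ₀P, hτ₀⟩ := tsPi_pos_elt hT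
  obtain ⟨M, hM0, hnet⟩ := ap_pair_net hT.2.1 hf hg hε
  refine ⟨2 * M + τ₀, by linarith, ?_⟩
  intro x
  obtain ⟨σ, hσP, hσmem⟩ := tsPi_dense hτ₀P hτ₀ (x + M)
  obtain ⟨r, hrP, hrM, hbd⟩ := hnet σ hσP
  have habs := abs_le.1 hrM
  simp only [mem_Icc] at hσmem
  have hτP : σ - r ∈ tsPi T := by
    have := tsPi_add hσP (tsPi_neg hrP)
    rwa [← sub_eq_add_neg] at this
  refine ⟨σ - r, hτP, ?_, ?_⟩
  · rw [mem_Icc]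
    constructor <;> linarith [hσmem.1, hσmem.2, habs.1, habs.2]
  · intro t ht
    have hw : t - r ∈ T := mem_sub_of_tsPi ht hrP
    have h := hbd (t - r) hw
    have e1 : t - r + σ = t + (σ - r) := by ring
    have e2 : t - r + r = t := by ring
    rw [e1, e2] at h
    exact h

end PapComplete
namespace PapComplete

variable {T : Set ℝ} {E : Type*} [NormedAddCommGroup E]

theorem ap_add (hT : APTimeScale T) {f g : ℝ → E} (hf : APfun T f) (hg : APfun T g) :
    APfun T (fun t => f t + g t) := by
  refine ⟨hf.1.add hg.1, ?_⟩
  intro ε hε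
  obtain ⟨L, hL, hcom⟩ := ap_common hT hf hg (show (0:ℝ) < ε/3 by linarith)
  refine ⟨L, hL, ?_⟩
  intro x
  obtain ⟨τ, hτP, hτmem, hτbd⟩ := hcom x
  refine ⟨τ, hτP, hτmem, ?_⟩
  intro t ht
  obtain ⟨h1, h2⟩ := hτbd t ht
  calc ‖(f (t + τ) + g (t + τ)) - (f t + g t)‖
      = ‖(f (t + τ) - f t) + (g (t + τ) - g t)‖ := by congr 1; abel
    _ ≤ ‖f (t + τ) - f t‖ + ‖g (t + τ) - g t‖ := norm_add_le _ _
    _ < ε := by linarith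

theorem ap_sub (hT : APTimeScale T) {f g : ℝ → E} (hf : APfun T f) (hg : APfun T g) :
    APfun T (fun t => f t - g t) := by
  refine ⟨hf.1.sub hg.1, ?_⟩
  intro ε hε
  obtain ⟨L, hL, hcom⟩ := ap_common hT hf hg (show (0:ℝ) < ε/3 by linarith)
  refine ⟨L, hL, ?_⟩
  intro x
  obtain ⟨τ, hτP, hτmem, hτbd⟩ := hcom x
  refine ⟨τ, hτP, hτmem, ?_⟩
  intro t ht
  obtain ⟨h1, h2⟩ := hτbd t ht
  calc ‖(f (t + τ) - g (t + τ)) - (f t - g t)‖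
      = ‖(f (t + τ) - f t) + -(g (t + τ) - g t)‖ := by congr 1; abel
    _ ≤ ‖f (t + τ) - f t‖ + ‖-(g (t + τ) - g t)‖ := norm_add_le _ _
    _ < ε := by rw [norm_neg]; linarith

theorem ap_comp_lip {φ : E → E} {C : ℝ} (hφc : Continuous φ) (hC : 0 ≤ C)
    (hlip : ∀ x y : E, ‖φ x - φ y‖ ≤ C * ‖x - y‖) {f : ℝ → E} (hf : APfun T f) :
    APfun T (fun t => φ (f t)) := by
  refine ⟨hφc.comp_continuousOn hf.1, ?_⟩
  intro ε hε
  have hε' : 0 < ε / (C + 1) := by positivity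
  obtain ⟨L, hL, hap⟩ := hf.2 _ hε'
  refine ⟨L, hL, ?_⟩
  intro x
  obtain ⟨τ, hτP, hτmem, hτbd⟩ := hap x
  refine ⟨τ, hτP, hτmem, ?_⟩
  intro t ht
  calc ‖φ (f (t + τ)) - φ (f t)‖ ≤ C * ‖f (t + τ) - f t‖ := hlip _ _
    _ ≤ C * (ε / (C + 1)) := by
        exact mul_le_mul_of_nonneg_left (le_of_lt (hτbd t ht)) hC
    _ < ε := by
        rw [div_eq_inv_mul, ← mul_assoc]
        have h1 : C * (C + 1)⁻¹ < 1 := by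
          rw [mul_inv_lt_iff₀ (by linarith)]; linarith
        nlinarith

theorem ap_lim {p : ℕ → ℝ → E} {G : ℝ → E} (hp : ∀ j, APfun T (p j))
    (hconv : ∀ ε > 0, ∃ J : ℕ, ∀ j ≥ J, ∀ t ∈ T, ‖p j t - G t‖ ≤ ε) :
    APfun T G := by
  constructor
  · have huc : TendstoUniformlyOn (fun j t => p j t) G atTop T := by
      rw [Metric.tendstoUniformlyOn_iff]
      intro ε hε
      obtain ⟨J, hJ⟩ := hconv (ε / 2) (by linarith)
      filter_upwards [eventually_ge_atTop J] with j hj t ht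
      rw [dist_comm, dist_eq_norm]
      exact lt_of_le_of_lt (hJ j hj t ht) (by linarith)
    exact huc.continuousOn (Eventually.of_forall fun j => (hp j).1).frequently
  · intro ε hε
    obtain ⟨J, hJ⟩ := hconv (ε / 4) (by linarith)
    obtain ⟨L, hL, hap⟩ := (hp J).2 (ε / 4) (by linarith)
    refine ⟨L, hL, ?_⟩
    intro x
    obtain ⟨τ, hτP, hτmem, hτbd⟩ := hap x
    refine ⟨τ, hτP, hτmem, ?_⟩
    intro t ht
    have h1 := hJ J le_rfl t ht
    have h2 := hJ J le_rfl (t + τ) (mem_add_of_tsPi ht hτP)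
    have h3 := hτbd t ht
    calc ‖G (t + τ) - G t‖
        = ‖-(p J (t + τ) - G (t + τ)) + (p J (t + τ) - p J t) + (p J t - G t)‖ := by
          congr 1; abel
      _ ≤ ‖-(p J (t + τ) - G (t + τ))‖ + ‖p J (t + τ) - p J t‖ + ‖p J t - G t‖ :=
          norm_add₃_le
      _ < ε := by rw [norm_neg]; linarith

end PapComplete
namespace PapComplete

variable {E : Type*} [NormedAddCommGroup E] [NormedSpace ℝ E]

/-- Radial truncation at radius `d`. -/
def Rtrunc (d : ℝ) (x : E) : E := if ‖x‖ ≤ d then x else (d / ‖x‖) • x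

theorem Rtrunc_norm_le {d : ℝ} (hd : 0 ≤ d) (x : E) : ‖Rtrunc d x‖ ≤ d := by
  unfold Rtrunc
  split_ifs with h
  · exact h
  · push_neg at h
    have hx : 0 < ‖x‖ := lt_of_le_of_lt hd h
    rw [norm_smul, Real.norm_eq_abs, abs_of_nonneg (by positivity), div_mul_cancel₀]
    exact ne_of_gt hx

theorem Rtrunc_sub_le {d c : ℝ} (hd : 0 ≤ d) (hc : 0 ≤ c) {x : E} (hx : ‖x‖ ≤ d + c) :
    ‖x - Rtrunc d x‖ ≤ c := by
  unfold Rtrunc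
  split_ifs with h
  · simpa using hc
  · push_neg at h
    have hx0 : 0 < ‖x‖ := lt_of_le_of_lt hd h
    have heq : x - (d / ‖x‖) • x = (1 - d / ‖x‖) • x := by
      rw [sub_smul, one_smul]
    rw [heq, norm_smul, Real.norm_eq_abs, abs_of_nonneg, sub_mul, one_mul,
      div_mul_cancel₀ _ (ne_of_gt hx0)]
    · linarith
    · rw [sub_nonneg, div_le_one hx0]; exact le_of_lt h

private theorem Rtrunc_lip_aux {d : ℝ} (hd : 0 ≤ d) {x y : E} (hx : ‖x‖ ≤ d)
    (hy : d < ‖y‖) : ‖Rtrunc d x - Rtrunc d y‖ ≤ 2 * ‖x - y‖ := by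
  have hy0 : 0 < ‖y‖ := lt_of_le_of_lt hd hy
  rw [show Rtrunc d x = x from if_pos hx,
    show Rtrunc d y = (d / ‖y‖) • y from if_neg (not_le.2 hy)]
  have heq : x - (d / ‖y‖) • y = (x - y) + (1 - d / ‖y‖) • y := by
    rw [sub_smul, one_smul]; abel
  rw [heq]
  have h3 : ‖(1 - d / ‖y‖) • y‖ = ‖y‖ - d := by
    rw [norm_smul, Real.norm_eq_abs, abs_of_nonneg, sub_mul, one_mul,
      div_mul_cancel₀ _ (ne_of_gt hy0)]
    rw [sub_nonneg, div_le_one hy0]; exact le_of_lt hy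
  have h4 : ‖y‖ - d ≤ ‖y‖ - ‖x‖ := by linarith
  have h5 : ‖y‖ - ‖x‖ ≤ ‖y - x‖ := norm_sub_norm_le _ _
  calc ‖(x - y) + (1 - d / ‖y‖) • y‖ ≤ ‖x - y‖ + ‖(1 - d / ‖y‖) • y‖ := norm_add_le _ _
    _ ≤ ‖x - y‖ + ‖y - x‖ := by rw [h3]; linarith
    _ = 2 * ‖x - y‖ := by rw [norm_sub_rev y x]; ring

theorem Rtrunc_lip {d : ℝ} (hd : 0 ≤ d) (x y : E) :
    ‖Rtrunc d x - Rtrunc d y‖ ≤ 2 * ‖x - y‖ := by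
  by_cases hx : ‖x‖ ≤ d <;> by_cases hy : ‖y‖ ≤ d
  · simp only [Rtrunc, if_pos hx, if_pos hy]
    linarith [norm_nonneg (x - y)]
  · push_neg at hy
    exact Rtrunc_lip_aux hd hx hy
  · push_neg at hx
    rw [norm_sub_rev]
    have := Rtrunc_lip_aux hd hy hx
    rwa [norm_sub_rev y x] at this
  · push_neg at hx hy
    have hx0 : 0 < ‖x‖ := lt_of_le_of_lt hd hx
    have hy0 : 0 < ‖y‖ := lt_of_le_of_lt hd hy
    simp only [Rtrunc, if_neg (not_le.2 hx), if_neg (not_le.2 hy)]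
    have heq : (d / ‖x‖) • x - (d / ‖y‖) • y
        = (d / ‖x‖) • (x - y) + ((d / ‖x‖) - (d / ‖y‖)) • y := by
      rw [smul_sub, sub_smul]; abel
    rw [heq]
    have h1 : ‖(d / ‖x‖) • (x - y)‖ ≤ ‖x - y‖ := by
      rw [norm_smul, Real.norm_eq_abs, abs_of_nonneg (by positivity)]
      have : d / ‖x‖ ≤ 1 := by rw [div_le_one hx0]; exact le_of_lt hx
      nlinarith [norm_nonneg (x - y)]
    have h2 : ‖((d / ‖x‖) - (d / ‖y‖)) • y‖ ≤ ‖x - y‖ := by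
      rw [norm_smul, Real.norm_eq_abs]
      have heq2 : (d / ‖x‖ - d / ‖y‖) = d * (‖y‖ - ‖x‖) / (‖x‖ * ‖y‖) := by
        field_simp
      rw [heq2, abs_div, abs_mul, abs_of_nonneg hd, abs_of_nonneg (by positivity : (0:ℝ) ≤ ‖x‖ * ‖y‖)]
      have h3 : |‖y‖ - ‖x‖| ≤ ‖x - y‖ := by
        rw [abs_sub_comm]
        exact abs_norm_sub_norm_le x y
      rw [div_mul_eq_mul_div]
      rw [div_le_iff₀ (by positivity)]
      have e1 : d * |‖y‖ - ‖x‖| * ‖y‖ ≤ ‖x‖ * |‖y‖ - ‖x‖| * ‖y‖ :=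
        mul_le_mul_of_nonneg_right
          (mul_le_mul_of_nonneg_right (le_of_lt hx) (abs_nonneg _)) (le_of_lt hy0)
      have e2 : ‖x‖ * |‖y‖ - ‖x‖| * ‖y‖ ≤ ‖x - y‖ * (‖x‖ * ‖y‖) := by
        have := mul_le_mul_of_nonneg_right h3 (le_of_lt (mul_pos hx0 hy0))
        calc ‖x‖ * |‖y‖ - ‖x‖| * ‖y‖ = |‖y‖ - ‖x‖| * (‖x‖ * ‖y‖) := by ring
          _ ≤ ‖x - y‖ * (‖x‖ * ‖y‖) := this
      linarith
    calc ‖(d / ‖x‖) • (x - y) + ((d / ‖x‖) - (d / ‖y‖)) • y‖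
        ≤ ‖(d / ‖x‖) • (x - y)‖ + ‖((d / ‖x‖) - (d / ‖y‖)) • y‖ := norm_add_le _ _
      _ ≤ 2 * ‖x - y‖ := by linarith

theorem Rtrunc_continuous {d : ℝ} (hd : 0 ≤ d) : Continuous (Rtrunc (E := E) d) := by
  have : LipschitzWith 2 (Rtrunc (E := E) d) := by
    apply LipschitzWith.of_dist_le_mul
    intro x y
    rw [dist_eq_norm, dist_eq_norm]
    simpa using Rtrunc_lip hd x y
  exact this.continuous

end PapComplete
namespace PapComplete

variable {T : Set ℝ} {u : ℝ → ℝ} {E : Type*} [NormedAddCommGroup E]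

theorem qr_measurable (hTcl : IsClosed T) (r : ℝ) : MeasurableSet (Qr T r) :=
  measurableSet_Icc.inter hTcl.measurableSet

theorem ae_mem_T (hTcl : IsClosed T) : ∀ᵐ t ∂(deltaMeasure T), t ∈ T := by
  rw [ae_iff]
  have hTc : MeasurableSet Tᶜ := hTcl.measurableSet.compl
  have hset : {a : ℝ | ¬ a ∈ T} = Tᶜ := rfl
  rw [hset]
  unfold deltaMeasure
  rw [Measure.add_apply, Measure.restrict_apply hTc, compl_inter_self, measure_empty,
    Measure.sum_apply _ hTc]
  have hz : ∀ p : {t : ℝ // t ∈ T ∧ t < tsSigma T t},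
      ((ENNReal.ofReal (tsGrain T p.1)) • Measure.dirac (p.1 : ℝ)) Tᶜ = 0 := by
    intro p
    rw [Measure.smul_apply, Measure.dirac_apply' _ hTc,
      Set.indicator_of_notMem (by simp [p.2.1])]
    simp
  simp [hz]

theorem integrableOn_u_Qr (hu : UInfty T u) (r : ℝ) :
    IntegrableOn u (Qr T r) (deltaMeasure T) :=
  hu.2.2.1 _ (Metric.isBounded_Icc (tsT0 T - r) (tsT0 T + r))

theorem integrableOn_norm_mul (hTcl : IsClosed T) (hu : UInfty T u) {φ : ℝ → E}
    (hφ : BCfun T φ) (r : ℝ) :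
    IntegrableOn (fun t => ‖φ t‖ * u t) (Qr T r) (deltaMeasure T) := by
  obtain ⟨C, hC⟩ := hφ.2
  have hqm : MeasurableSet (Qr T r) := qr_measurable hTcl r
  have hTsub : Qr T r ⊆ T := inter_subset_right
  have hui : IntegrableOn u (Qr T r) (deltaMeasure T) := integrableOn_u_Qr hu r
  refine Integrable.mono' (hui.const_mul C) ?_ ?_
  · exact (((hφ.1.mono hTsub).norm).aestronglyMeasurable hqm).mul
      (hu.1.aestronglyMeasurable.restrict)
  · filter_upwards [ae_restrict_mem hqm] with t ht
    have htT : t ∈ T := hTsub ht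
    have hu0 : 0 ≤ u t := le_of_lt (hu.2.1 t htT)
    rw [Real.norm_eq_abs, abs_mul, abs_of_nonneg hu0, abs_of_nonneg (norm_nonneg _)]
    exact mul_le_mul_of_nonneg_right (hC t htT) hu0

theorem uQ_nonneg (hTcl : IsClosed T) (hu : UInfty T u) (r : ℝ) : 0 ≤ uQ T u r := by
  refine integral_nonneg_of_ae ?_
  exact ae_restrict_of_ae ((ae_mem_T hTcl).mono fun t ht => le_of_lt (hu.2.1 t ht))

theorem papA_nonneg (hTcl : IsClosed T) (hu : UInfty T u) (φ : ℝ → E) (r : ℝ) :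
    0 ≤ (uQ T u r)⁻¹ * ∫ t in Qr T r, ‖φ t‖ * u t ∂(deltaMeasure T) := by
  refine mul_nonneg (inv_nonneg.2 (uQ_nonneg hTcl hu r)) (integral_nonneg_of_ae ?_)
  refine ae_restrict_of_ae ((ae_mem_T hTcl).mono fun t ht => ?_)
  exact mul_nonneg (norm_nonneg _) (le_of_lt (hu.2.1 t ht))

theorem papA_le (hTcl : IsClosed T) (hu : UInfty T u) {φ φ₁ φ₂ : ℝ → E}
    (hφ : BCfun T φ) (h1 : BCfun T φ₁) (h2 : BCfun T φ₂) {c : ℝ} (hc : 0 ≤ c)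
    (hle : ∀ t ∈ T, ‖φ t‖ ≤ ‖φ₁ t‖ + ‖φ₂ t‖ + c) (r : ℝ) :
    (uQ T u r)⁻¹ * ∫ t in Qr T r, ‖φ t‖ * u t ∂(deltaMeasure T) ≤
      (uQ T u r)⁻¹ * ∫ t in Qr T r, ‖φ₁ t‖ * u t ∂(deltaMeasure T) +
      (uQ T u r)⁻¹ * ∫ t in Qr T r, ‖φ₂ t‖ * u t ∂(deltaMeasure T) + c := by
  have hqm : MeasurableSet (Qr T r) := qr_measurable hTcl r
  have hTsub : Qr T r ⊆ T := inter_subset_right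
  have hint := integrableOn_norm_mul hTcl hu hφ r
  have hint1 := integrableOn_norm_mul hTcl hu h1 r
  have hint2 := integrableOn_norm_mul hTcl hu h2 r
  have hintu : IntegrableOn (fun t => c * u t) (Qr T r) (deltaMeasure T) :=
    (integrableOn_u_Qr hu r).const_mul c
  have hIle : (∫ t in Qr T r, ‖φ t‖ * u t ∂(deltaMeasure T)) ≤
      (∫ t in Qr T r, ‖φ₁ t‖ * u t ∂(deltaMeasure T)) +
      (∫ t in Qr T r, ‖φ₂ t‖ * u t ∂(deltaMeasure T)) + c * uQ T u r := by
    have hmono : (∫ t in Qr T r, ‖φ t‖ * u t ∂(deltaMeasure T)) ≤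
        ∫ t in Qr T r, (‖φ₁ t‖ * u t + ‖φ₂ t‖ * u t + c * u t) ∂(deltaMeasure T) := by
      refine integral_mono_ae hint ((hint1.add hint2).add hintu) ?_
      filter_upwards [ae_restrict_mem hqm,
        ae_restrict_of_ae (ae_mem_T hTcl)] with t htQ htT
      have hu0 : 0 ≤ u t := le_of_lt (hu.2.1 t htT)
      have hm := mul_le_mul_of_nonneg_right (hle t htT) hu0
      rw [add_mul, add_mul] at hm
      exact hm
    have a1 := integral_add hint1 hint2
    have a2 := integral_add (hint1.add hint2) hintu
    simp only [Pi.add_apply] at a1 a2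
    rw [a2, a1, integral_const_mul] at hmono
    exact hmono
  rcases eq_or_lt_of_le (uQ_nonneg hTcl hu r) with hQ0 | hQpos
  · rw [← hQ0, inv_zero, zero_mul, zero_mul, zero_mul]
    linarith
  · have h2' := mul_le_mul_of_nonneg_left hIle (le_of_lt (inv_pos.2 hQpos))
    calc (uQ T u r)⁻¹ * ∫ t in Qr T r, ‖φ t‖ * u t ∂(deltaMeasure T)
        ≤ (uQ T u r)⁻¹ * ((∫ t in Qr T r, ‖φ₁ t‖ * u t ∂(deltaMeasure T)) +
          (∫ t in Qr T r, ‖φ₂ t‖ * u t ∂(deltaMeasure T)) + c * uQ T u r) := h2'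
      _ = (uQ T u r)⁻¹ * (∫ t in Qr T r, ‖φ₁ t‖ * u t ∂(deltaMeasure T)) +
          (uQ T u r)⁻¹ * (∫ t in Qr T r, ‖φ₂ t‖ * u t ∂(deltaMeasure T)) +
          c * ((uQ T u r)⁻¹ * uQ T u r) := by ring
      _ = _ := by rw [inv_mul_cancel₀ (ne_of_gt hQpos), mul_one]

end PapComplete
namespace PapComplete

variable {T : Set ℝ} {u : ℝ → ℝ} {E : Type*} [NormedAddCommGroup E]

theorem pap0_tendsto_of_bound (hTcl : IsClosed T) (hu : UInfty T u) {φ : ℝ → E}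
    (hb : ∀ ε > 0, ∀ᶠ r in alongPi T,
      (uQ T u r)⁻¹ * ∫ t in Qr T r, ‖φ t‖ * u t ∂(deltaMeasure T) < ε) :
    Tendsto (fun r => (uQ T u r)⁻¹ * ∫ t in Qr T r, ‖φ t‖ * u t ∂(deltaMeasure T))
      (alongPi T) (nhds 0) := by
  rw [Metric.tendsto_nhds]
  intro ε hε
  filter_upwards [hb ε hε] with r hr
  rw [Real.dist_eq, sub_zero, abs_of_nonneg (papA_nonneg hTcl hu φ r)]
  exact hr

theorem pap0_eventually_lt (hTcl : IsClosed T) (hu : UInfty T u) {ψ : ℝ → E}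
    (hψ : PAP0fun T u ψ) {ε : ℝ} (hε : 0 < ε) :
    ∀ᶠ r in alongPi T,
      (uQ T u r)⁻¹ * ∫ t in Qr T r, ‖ψ t‖ * u t ∂(deltaMeasure T) < ε := by
  have := Metric.tendsto_nhds.1 hψ.2 ε hε
  filter_upwards [this] with r hr
  rw [Real.dist_eq, sub_zero, abs_of_nonneg (papA_nonneg hTcl hu ψ r)] at hr
  exact hr

/-- Domination principle for `PAP₀`. -/
theorem pap0_of_le (hTcl : IsClosed T) (hu : UInfty T u) {φ ψ : ℝ → E}
    (hφb : BCfun T φ) (hψ : PAP0fun T u ψ) (hle : ∀ t ∈ T, ‖φ t‖ ≤ ‖ψ t‖) :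
    PAP0fun T u φ := by
  refine ⟨hφb, pap0_tendsto_of_bound hTcl hu ?_⟩
  intro ε hε
  filter_upwards [pap0_eventually_lt hTcl hu hψ (show (0:ℝ) < ε/2 by linarith)] with r hr
  have hA := papA_le hTcl hu hφb hψ.1 hψ.1 (le_refl (0:ℝ))
    (fun t ht => by
      have := hle t ht
      have h0 : (0:ℝ) ≤ ‖ψ t‖ := norm_nonneg _
      linarith) r
  linarith

theorem pap0_add (hTcl : IsClosed T) (hu : UInfty T u) {h₁ h₂ : ℝ → E}
    (hh₁ : PAP0fun T u h₁) (hh₂ : PAP0fun T u h₂) :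
    PAP0fun T u (fun t => h₁ t + h₂ t) := by
  have hb : BCfun T (fun t => h₁ t + h₂ t) := by
    obtain ⟨C₁, hC₁⟩ := hh₁.1.2
    obtain ⟨C₂, hC₂⟩ := hh₂.1.2
    exact ⟨hh₁.1.1.add hh₂.1.1, C₁ + C₂, fun t ht =>
      le_trans (norm_add_le _ _) (add_le_add (hC₁ t ht) (hC₂ t ht))⟩
  refine ⟨hb, pap0_tendsto_of_bound hTcl hu ?_⟩
  intro ε hε
  filter_upwards [pap0_eventually_lt hTcl hu hh₁ (show (0:ℝ) < ε/3 by linarith),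
    pap0_eventually_lt hTcl hu hh₂ (show (0:ℝ) < ε/3 by linarith)] with r hr₁ hr₂
  have hA := papA_le hTcl hu hb hh₁.1 hh₂.1 (le_refl (0:ℝ))
    (fun t ht => by
      have := norm_add_le (h₁ t) (h₂ t)
      linarith) r
  linarith

/-- `PAP₀` is closed under uniform limits on `T`. -/
theorem pap0_lim (hTcl : IsClosed T) (hu : UInfty T u) {p : ℕ → ℝ → E} {H : ℝ → E}
    (hp : ∀ j, PAP0fun T u (p j))
    (hconv : ∀ ε > 0, ∃ J : ℕ, ∀ j ≥ J, ∀ t ∈ T, ‖p j t - H t‖ ≤ ε) :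
    PAP0fun T u H := by
  have hHb : BCfun T H := by
    constructor
    · have huc : TendstoUniformlyOn (fun j t => p j t) H atTop T := by
        rw [Metric.tendstoUniformlyOn_iff]
        intro ε hε
        obtain ⟨J, hJ⟩ := hconv (ε / 2) (by linarith)
        filter_upwards [eventually_ge_atTop J] with j hj t ht
        rw [dist_comm, dist_eq_norm]
        exact lt_of_le_of_lt (hJ j hj t ht) (by linarith)
      exact huc.continuousOn (Eventually.of_forall fun j => (hp j).1.1).frequently
    · obtain ⟨J, hJ⟩ := hconv 1 one_pos
      obtain ⟨C, hC⟩ := (hp J).1.2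
      refine ⟨C + 1, fun t ht => ?_⟩
      calc ‖H t‖ = ‖p J t - (p J t - H t)‖ := by congr 1; abel
        _ ≤ ‖p J t‖ + ‖p J t - H t‖ := norm_sub_le _ _
        _ ≤ C + 1 := add_le_add (hC t ht) (hJ J le_rfl t ht)
  refine ⟨hHb, pap0_tendsto_of_bound hTcl hu ?_⟩
  intro ε hε
  obtain ⟨J, hJ⟩ := hconv (ε / 4) (by linarith)
  filter_upwards [pap0_eventually_lt hTcl hu (hp J)
    (show (0:ℝ) < ε/8 by linarith)] with r hr
  have hA := papA_le hTcl hu hHb (hp J).1 (hp J).1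
    (show (0:ℝ) ≤ ε/4 by linarith)
    (fun t ht => by
      have h1 := hJ J le_rfl t ht
      have h2 : ‖H t‖ ≤ ‖p J t‖ + ‖p J t - H t‖ := by
        calc ‖H t‖ = ‖p J t - (p J t - H t)‖ := by congr 1; abel
          _ ≤ ‖p J t‖ + ‖p J t - H t‖ := norm_sub_le _ _
      have h0 : (0:ℝ) ≤ ‖p J t‖ := norm_nonneg _
      linarith) r
  linarith

end PapComplete
namespace PapComplete

variable {T : Set ℝ} {u : ℝ → ℝ} {E : Type*} [NormedAddCommGroup E]

theorem pap0_zero (hTcl : IsClosed T) (hu : UInfty T u) :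
    PAP0fun T u (fun _ : ℝ => (0 : E)) := by
  refine ⟨⟨continuousOn_const, 0, fun t ht => by simp⟩, ?_⟩
  have hz : (fun r => (uQ T u r)⁻¹ *
      ∫ t in Qr T r, ‖(0 : E)‖ * u t ∂(deltaMeasure T)) = fun _ => (0:ℝ) := by
    funext r; simp
  rw [hz]
  exact tendsto_const_nhds

theorem pap0_sub (hTcl : IsClosed T) (hu : UInfty T u) {h₁ h₂ : ℝ → E}
    (hh₁ : PAP0fun T u h₁) (hh₂ : PAP0fun T u h₂) :
    PAP0fun T u (fun t => h₁ t - h₂ t) := by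
  have hb : BCfun T (fun t => h₁ t - h₂ t) := by
    obtain ⟨C₁, hC₁⟩ := hh₁.1.2
    obtain ⟨C₂, hC₂⟩ := hh₂.1.2
    exact ⟨hh₁.1.1.sub hh₂.1.1, C₁ + C₂, fun t ht =>
      le_trans (norm_sub_le _ _) (add_le_add (hC₁ t ht) (hC₂ t ht))⟩
  refine ⟨hb, pap0_tendsto_of_bound hTcl hu ?_⟩
  intro ε hε
  filter_upwards [pap0_eventually_lt hTcl hu hh₁ (show (0:ℝ) < ε/3 by linarith),
    pap0_eventually_lt hTcl hu hh₂ (show (0:ℝ) < ε/3 by linarith)] with r hr₁ hr₂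
  have hA := papA_le hTcl hu hb hh₁.1 hh₂.1 (le_refl (0:ℝ))
    (fun t ht => by
      have := norm_sub_le (h₁ t) (h₂ t)
      linarith) r
  linarith

theorem geom_Ico {J J' : ℕ} (hJ : J ≤ J') :
    ∑ j ∈ Finset.Ico J J', (1/2 : ℝ)^j = 2 * ((1/2)^J - (1/2)^J') := by
  induction J', hJ using Nat.le_induction with
  | base => simp
  | succ J' hJJ' ih =>
    rw [Finset.sum_Ico_succ_top hJJ', ih, pow_succ]
    ring

theorem geom_Ico_le (J J' : ℕ) :
    ∑ j ∈ Finset.Ico J J', (1/2 : ℝ)^j ≤ 2 * (1/2)^J := by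
  rcases le_or_gt J J' with h | h
  · rw [geom_Ico h]
    have : (0:ℝ) ≤ (1/2)^J' := by positivity
    linarith
  · rw [Finset.Ico_eq_empty (by omega), Finset.sum_empty]
    positivity

end PapComplete
open PapComplete

/-- Completeness of `(PAP(T,ℝⁿ,u), ‖·‖_∞)` for `u ∈ U_∞^Inv`: every sequence in `PAP(T,ℝⁿ,u)`
that is uniformly Cauchy on `T` converges uniformly on `T` to a member of `PAP(T,ℝⁿ,u)`. -/
theorem pap_complete {n : ℕ} (T : Set ℝ) (hT : APTimeScale T)
    (u : ℝ → ℝ) (hu : UInftyInv T u)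
    (f : ℕ → ℝ → Fin n → ℝ) (hfm : ∀ m, PAPfun T u (f m))
    (hcauchy : ∀ ε > 0, ∃ N : ℕ, ∀ m ≥ N, ∀ k ≥ N, ∀ t ∈ T, ‖f m t - f k t‖ ≤ ε) :
    ∃ g : ℝ → Fin n → ℝ, PAPfun T u g ∧
      ∀ ε > 0, ∃ N : ℕ, ∀ m ≥ N, ∀ t ∈ T, ‖f m t - g t‖ ≤ ε := by
  classical
  obtain ⟨hTne, hTcl, hpi⟩ := hT
  have hT' : APTimeScale T := ⟨hTne, hTcl, hpi⟩
  have hu' : UInfty T u := hu.1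
  choose g h hg hh hsum using hfm
  have hcau : ∀ t, t ∈ T → CauchySeq (fun m => f m t) := by
    intro t ht
    rw [Metric.cauchySeq_iff]
    intro ε hε
    obtain ⟨N, hN⟩ := hcauchy (ε/2) (by linarith)
    refine ⟨N, fun m hm k hk => ?_⟩
    rw [dist_eq_norm]
    exact lt_of_le_of_lt (hN m hm k hk t ht) (by linarith)
  set F : ℝ → Fin n → ℝ := fun t =>
    if ht : t ∈ T then (cauchySeq_tendsto_of_complete (hcau t ht)).choose else 0 with hFdef
  have hF : ∀ t, ∀ ht : t ∈ T, Tendsto (fun m => f m t) atTop (nhds (F t)) := by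
    intro t ht
    simp only [hFdef, dif_pos ht]
    exact (cauchySeq_tendsto_of_complete (hcau t ht)).choose_spec
  have hFu : ∀ ε > 0, ∃ N : ℕ, ∀ m ≥ N, ∀ t ∈ T, ‖f m t - F t‖ ≤ ε := by
    intro ε hε
    obtain ⟨N, hN⟩ := hcauchy ε hε
    refine ⟨N, fun m hm t ht => ?_⟩
    have h1 : Tendsto (fun k => ‖f m t - f k t‖) atTop (nhds ‖f m t - F t‖) :=
      (tendsto_const_nhds.sub (hF t ht)).norm
    refine le_of_tendsto h1 ?_
    filter_upwards [eventually_ge_atTop N] with k hk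
    exact hN m hm k hk t ht
  have hNc : ∀ j : ℕ, ∃ N, ∀ m ≥ N, ∀ k ≥ N, ∀ t ∈ T, ‖f m t - f k t‖ ≤ (1/2:ℝ)^j :=
    fun j => hcauchy _ (by positivity)
  choose Nc hNcs using hNc
  set φ : ℕ → ℕ := fun j => Nat.rec (Nc 0) (fun j ih => max (Nc (j+1)) (ih + 1)) j with hφdef
  have hφsucc : ∀ j, φ (j+1) = max (Nc (j+1)) (φ j + 1) := fun j => rfl
  have hφlt : ∀ j, φ j < φ (j+1) := fun j => by
    rw [hφsucc]; exact lt_of_lt_of_le (Nat.lt_succ_self _) (le_max_right _ _)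
  have hφmono : StrictMono φ := strictMono_nat_of_lt_succ hφlt
  have hφN : ∀ j, Nc j ≤ φ j := by
    intro j
    cases j with
    | zero => exact le_refl _
    | succ j => rw [hφsucc]; exact le_max_left _ _
  have hstep : ∀ j, ∀ t ∈ T, ‖f (φ (j+1)) t - f (φ j) t‖ ≤ (1/2:ℝ)^j := by
    intro j t ht
    exact hNcs j _ (le_of_lt (lt_of_le_of_lt (hφN j) (hφlt j))) _ (hφN j) t ht
  set a : ℕ → ℝ → Fin n → ℝ := fun j t => g (φ (j+1)) t - g (φ j) t with hadef
  set b : ℕ → ℝ → Fin n → ℝ := fun j t => h (φ (j+1)) t - h (φ j) t with hbdef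
  have haap : ∀ j, APfun T (a j) := fun j => ap_sub hT' (hg _) (hg _)
  have hbp : ∀ j, PAP0fun T u (b j) := fun j => pap0_sub hTcl hu' (hh _) (hh _)
  have hab : ∀ j, ∀ t ∈ T, a j t + b j t = f (φ (j+1)) t - f (φ j) t := by
    intro j t ht
    simp only [hadef, hbdef]
    rw [hsum (φ (j+1)) t ht, hsum (φ j) t ht]
    abel
  have hanorm : ∀ j, ∀ t ∈ T, ‖a j t‖ ≤ (1/2:ℝ)^j + ‖b j t‖ := by
    intro j t ht
    have h1 : ‖a j t + b j t‖ ≤ (1/2:ℝ)^j := by rw [hab j t ht]; exact hstep j t ht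
    calc ‖a j t‖ = ‖(a j t + b j t) - b j t‖ := by congr 1; abel
      _ ≤ ‖a j t + b j t‖ + ‖b j t‖ := norm_sub_le _ _
      _ ≤ _ := by linarith
  set ρ : ℕ → ℝ → Fin n → ℝ := fun j t => Rtrunc ((1/2:ℝ)^j) (a j t) with hρdef
  set ψ : ℕ → ℝ → Fin n → ℝ := fun j t => a j t - Rtrunc ((1/2:ℝ)^j) (a j t) with hψdef
  have hd0 : ∀ j : ℕ, (0:ℝ) ≤ (1/2:ℝ)^j := fun j => by positivity
  have hρap : ∀ j, APfun T (ρ j) :=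
    fun j => ap_comp_lip (Rtrunc_continuous (hd0 j)) (by norm_num : (0:ℝ) ≤ 2)
      (fun x y => Rtrunc_lip (hd0 j) x y) (haap j)
  have hψap : ∀ j, APfun T (ψ j) := by
    intro j
    refine ap_comp_lip (continuous_id.sub (Rtrunc_continuous (hd0 j)))
      (by norm_num : (0:ℝ) ≤ 3) ?_ (haap j)
    intro x y
    have hL := Rtrunc_lip (hd0 j) x y
    calc ‖(x - Rtrunc ((1/2:ℝ)^j) x) - (y - Rtrunc ((1/2:ℝ)^j) y)‖
        = ‖(x - y) - (Rtrunc ((1/2:ℝ)^j) x - Rtrunc ((1/2:ℝ)^j) y)‖ := by congr 1; abel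
      _ ≤ ‖x - y‖ + ‖Rtrunc ((1/2:ℝ)^j) x - Rtrunc ((1/2:ℝ)^j) y‖ := norm_sub_le _ _
      _ ≤ 3 * ‖x - y‖ := by linarith
  have hψle : ∀ j, ∀ t ∈ T, ‖ψ j t‖ ≤ ‖b j t‖ := by
    intro j t ht
    exact Rtrunc_sub_le (hd0 j) (norm_nonneg _) (hanorm j t ht)
  have hψb : ∀ j, BCfun T (ψ j) := by
    intro j
    obtain ⟨Cb, hCb⟩ := (hbp j).1.2
    refine ⟨?_, Cb, fun t ht => le_trans (hψle j t ht) (hCb t ht)⟩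
    exact (haap j).1.sub ((Rtrunc_continuous (hd0 j)).comp_continuousOn (haap j).1)
  have hψp : ∀ j, PAP0fun T u (ψ j) :=
    fun j => pap0_of_le hTcl hu' (hψb j) (hbp j) (hψle j)
  have hρnorm : ∀ j t, ‖ρ j t‖ ≤ (1/2:ℝ)^j := fun j t => Rtrunc_norm_le (hd0 j) _
  set Gh : ℕ → ℝ → Fin n → ℝ := fun J t => g (φ 0) t + ∑ j ∈ Finset.range J, ρ j t
    with hGhdef
  have hGhap : ∀ J, APfun T (Gh J) := by
    intro J
    induction J with
    | zero =>
      have e : Gh 0 = g (φ 0) := by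
        funext t; simp [hGhdef]
      rw [e]; exact hg (φ 0)
    | succ J ih =>
      have h2 := ap_add hT' ih (hρap J)
      have e : Gh (J+1) = (fun t => Gh J t + ρ J t) := by
        funext t; simp only [hGhdef, Finset.sum_range_succ]; abel
      rw [e]; exact h2
  have hGhdiff : ∀ J J', J ≤ J' → ∀ t, Gh J' t - Gh J t = ∑ j ∈ Finset.Ico J J', ρ j t := by
    intro J J' hJJ t
    have hc := Finset.sum_Ico_consecutive (fun j => ρ j t) (Nat.zero_le J) hJJ
    simp only [hGhdef, Finset.range_eq_Ico]
    rw [← hc]; abel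
  have hGhcauchy : ∀ J J', J ≤ J' → ∀ t, ‖Gh J' t - Gh J t‖ ≤ 2 * (1/2:ℝ)^J := by
    intro J J' hJJ t
    rw [hGhdiff J J' hJJ t]
    calc ‖∑ j ∈ Finset.Ico J J', ρ j t‖ ≤ ∑ j ∈ Finset.Ico J J', ‖ρ j t‖ :=
          norm_sum_le _ _
      _ ≤ ∑ j ∈ Finset.Ico J J', (1/2:ℝ)^j := Finset.sum_le_sum fun j _ => hρnorm j t
      _ ≤ 2 * (1/2)^J := geom_Ico_le J J'
  have hGcau : ∀ t, CauchySeq (fun J => Gh J t) := by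
    intro t
    rw [Metric.cauchySeq_iff']
    intro ε hε
    obtain ⟨J0, hJ0⟩ := exists_pow_lt_of_lt_one (show (0:ℝ) < ε/2 by linarith)
      (by norm_num : (1/2:ℝ) < 1)
    refine ⟨J0, fun J hJ => ?_⟩
    rw [dist_eq_norm]
    exact lt_of_le_of_lt (hGhcauchy J0 J hJ t) (by linarith)
  set G : ℝ → Fin n → ℝ := fun t => (cauchySeq_tendsto_of_complete (hGcau t)).choose
    with hGdef
  have hG : ∀ t, Tendsto (fun J => Gh J t) atTop (nhds (G t)) := by
    intro t
    simp only [hGdef]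
    exact (cauchySeq_tendsto_of_complete (hGcau t)).choose_spec
  have hGunif : ∀ J t, ‖Gh J t - G t‖ ≤ 2 * (1/2:ℝ)^J := by
    intro J t
    have h1 : Tendsto (fun J' => ‖Gh J t - Gh J' t‖) atTop (nhds ‖Gh J t - G t‖) :=
      (tendsto_const_nhds.sub (hG t)).norm
    refine le_of_tendsto h1 ?_
    filter_upwards [eventually_ge_atTop J] with J' hJ'
    rw [norm_sub_rev]
    exact hGhcauchy J J' hJ' t
  have hpow_le : ∀ {J j : ℕ}, J ≤ j → ((1:ℝ)/2)^j ≤ (1/2)^J :=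
    fun hJj => pow_le_pow_of_le_one (by norm_num) (by norm_num) hJj
  have hGap : APfun T G := by
    refine ap_lim hGhap ?_
    intro ε hε
    obtain ⟨J0, hJ0⟩ := exists_pow_lt_of_lt_one (show (0:ℝ) < ε/2 by linarith)
      (by norm_num : (1/2:ℝ) < 1)
    refine ⟨J0, fun j hj t ht => ?_⟩
    calc ‖Gh j t - G t‖ ≤ 2 * (1/2)^j := hGunif j t
      _ ≤ 2 * (1/2)^J0 := by have := hpow_le hj; linarith
      _ ≤ ε := by linarith
  set H : ℝ → Fin n → ℝ := fun t => F t - G t with hHdef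
  set P : ℕ → ℝ → Fin n → ℝ := fun J t => h (φ J) t + ∑ j ∈ Finset.range J, ψ j t
    with hPdef
  have hSp : ∀ J, PAP0fun T u (fun t => ∑ j ∈ Finset.range J, ψ j t) := by
    intro J
    induction J with
    | zero =>
      have e : (fun t : ℝ => ∑ j ∈ Finset.range 0, ψ j t)
          = fun _ : ℝ => (0 : Fin n → ℝ) := by funext t; simp
      rw [e]; exact pap0_zero hTcl hu'
    | succ J ih =>
      have h2 := pap0_add hTcl hu' ih (hψp J)
      have e : (fun t : ℝ => ∑ j ∈ Finset.range (J+1), ψ j t)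
          = fun t => (∑ j ∈ Finset.range J, ψ j t) + ψ J t := by
        funext t; rw [Finset.sum_range_succ]
      rw [e]; exact h2
  have hPp : ∀ J, PAP0fun T u (P J) := fun J => pap0_add hTcl hu' (hh (φ J)) (hSp J)
  have hPid : ∀ J, ∀ t ∈ T, P J t = f (φ J) t - Gh J t := by
    intro J t ht
    have htel : ∑ j ∈ Finset.range J, a j t = g (φ J) t - g (φ 0) t := by
      simpa [hadef] using Finset.sum_range_sub (fun j => g (φ j) t) J
    have hsplit : ∑ j ∈ Finset.range J, a j t
        = (∑ j ∈ Finset.range J, ψ j t) + ∑ j ∈ Finset.range J, ρ j t := by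
      rw [← Finset.sum_add_distrib]
      refine Finset.sum_congr rfl fun j _ => ?_
      simp only [hψdef, hρdef]; abel
    have hkey : (∑ j ∈ Finset.range J, ψ j t)
        = g (φ J) t - g (φ 0) t - ∑ j ∈ Finset.range J, ρ j t := by
      rw [← htel, hsplit]; abel
    simp only [hPdef, hGhdef]
    rw [hsum (φ J) t ht, hkey]
    abel
  have hHconv : ∀ ε > 0, ∃ J : ℕ, ∀ j ≥ J, ∀ t ∈ T, ‖P j t - H t‖ ≤ ε := by
    intro ε hε
    obtain ⟨N1, hN1⟩ := hFu (ε/2) (by linarith)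
    obtain ⟨J0, hJ0⟩ := exists_pow_lt_of_lt_one (show (0:ℝ) < ε/4 by linarith)
      (by norm_num : (1/2:ℝ) < 1)
    refine ⟨max N1 J0, fun j hj t ht => ?_⟩
    have hjN1 : N1 ≤ φ j := le_trans (le_trans (le_max_left _ _) hj) hφmono.le_apply
    have h1 : ‖f (φ j) t - F t‖ ≤ ε/2 := hN1 (φ j) hjN1 t ht
    have h2 : ‖Gh j t - G t‖ ≤ 2*(1/2:ℝ)^j := hGunif j t
    have h3 : (1/2:ℝ)^j ≤ (1/2)^J0 := hpow_le (le_trans (le_max_right _ _) hj)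
    rw [hPid j t ht]
    calc ‖(f (φ j) t - Gh j t) - H t‖
        = ‖(f (φ j) t - F t) + (G t - Gh j t)‖ := by
          simp only [hHdef]; congr 1; abel
      _ ≤ ‖f (φ j) t - F t‖ + ‖G t - Gh j t‖ := norm_add_le _ _
      _ ≤ ε/2 + 2*(1/2:ℝ)^j := by
          rw [norm_sub_rev (G t) (Gh j t)]; exact add_le_add h1 h2
      _ ≤ ε := by linarith
  have hHp : PAP0fun T u H := pap0_lim hTcl hu' hPp hHconv
  refine ⟨F, ⟨G, H, hGap, hHp, fun t ht => by simp only [hHdef]; abel⟩, ?_⟩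
  intro ε hε
  exact hFu ε hε
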